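/- arXiv:math/0209292 — 3 statements merged into one kernel-verified Lean document; each statement's English description precedes it below -/
import Mathlib

section
/- Let U be a free ultrafilter on ℕ and (A n) a sequence of unital complex C*-algebras. If u ∈ ∏_U A n is unitary (u* u = u u* = 1), then there exists a unitary w ∈ ℓ∞(A) (w* w = w w* = 1) with π(w) = u. -/
open Filter Topology ENNReal Pointwise

noncomputable section

section UltraCStar

variable (U : Ultrafilter ℕ) (A : ℕ → Type*) [∀ n, CStarAlgebra (A n)] [∀ n, Nontrivial (A n)]

/-- The limit along the ultrafilter `U` of the sequence of norms of `x ∈ ℓ∞(A)`. -/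
def ulim (x : lp A ∞) : ℝ := limUnder (U : Filter ℕ) fun n => ‖x n‖

variable {U A}

theorem exists_tendsto_norm (x : lp A ∞) :
    ∃ r : ℝ, Tendsto (fun n => ‖x n‖) (U : Filter ℕ) (𝓝 r) := by
  obtain ⟨C, hC⟩ := (lp.memℓp x).bddAbove
  have h : (↑(U.map fun n => ‖x n‖) : Filter ℝ) ≤ 𝓟 (Set.Icc 0 C) := by
    rw [Ultrafilter.coe_map, le_principal_iff, mem_map]
    exact univ_mem' fun n => ⟨norm_nonneg _, hC ⟨n, rfl⟩⟩
  obtain ⟨r, -, hr⟩ := isCompact_Icc.ultrafilter_le_nhds (U.map fun n => ‖x n‖) h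
  exact ⟨r, by rwa [Ultrafilter.coe_map] at hr⟩

theorem tendsto_ulim (x : lp A ∞) :
    Tendsto (fun n => ‖x n‖) (U : Filter ℕ) (𝓝 (ulim U A x)) :=
  tendsto_nhds_limUnder (exists_tendsto_norm x)

theorem ulim_eq {x : lp A ∞} {r : ℝ}
    (h : Tendsto (fun n => ‖x n‖) (U : Filter ℕ) (𝓝 r)) : ulim U A x = r :=
  tendsto_nhds_unique (tendsto_ulim x) h

theorem ulim_zero : ulim U A 0 = 0 :=
  ulim_eq <| by
    have : ∀ n, ‖(0 : lp A ∞) n‖ = (0 : ℝ) := fun n => by simp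
    simpa [this] using tendsto_const_nhds

theorem ulim_neg (x : lp A ∞) : ulim U A (-x) = ulim U A x :=
  ulim_eq <| (tendsto_ulim x).congr fun n => by simp

theorem ulim_add_le (x y : lp A ∞) : ulim U A (x + y) ≤ ulim U A x + ulim U A y := by
  refine le_of_tendsto_of_tendsto' (tendsto_ulim (x + y))
    ((tendsto_ulim x).add (tendsto_ulim y)) fun n => ?_
  calc ‖(x + y) n‖ = ‖x n + y n‖ := by simp
    _ ≤ ‖x n‖ + ‖y n‖ := norm_add_le _ _

theorem ulim_mul_le (x y : lp A ∞) : ulim U A (x * y) ≤ ulim U A x * ulim U A y := by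
  refine le_of_tendsto_of_tendsto' (tendsto_ulim (x * y))
    ((tendsto_ulim x).mul (tendsto_ulim y)) fun n => ?_
  calc ‖(x * y) n‖ = ‖x n * y n‖ := by simp
    _ ≤ ‖x n‖ * ‖y n‖ := norm_mul_le _ _

theorem ulim_smul (c : ℂ) (x : lp A ∞) : ulim U A (c • x) = ‖c‖ * ulim U A x :=
  ulim_eq <| ((tendsto_ulim x).const_mul ‖c‖).congr fun n => by
    simp [norm_smul]

theorem ulim_star (x : lp A ∞) : ulim U A (star x) = ulim U A x :=
  ulim_eq <| (tendsto_ulim x).congr fun n => by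
    simp [lp.coeFn_star]

variable (U A)

/-- The additive seminorm `x ↦ lim_U ‖x n‖` on `ℓ∞(A)`. -/
def upAddSeminorm : AddGroupSeminorm (lp A ∞) where
  toFun := ulim U A
  map_zero' := ulim_zero
  add_le' := ulim_add_le
  neg' := ulim_neg

/-- Type synonym of `ℓ∞(A)` carrying the seminorm `x ↦ lim_U ‖x n‖`. -/
def PreUP (_U : Ultrafilter ℕ) (A : ℕ → Type*) [∀ n, CStarAlgebra (A n)] : Type _ := lp A ∞

/-- The identity map `ℓ∞(A) → PreUP U A`. -/
def toPre : lp A ∞ → PreUP U A := id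

instance : Ring (PreUP U A) := (inferInstance : Ring (lp A ∞))

instance : StarRing (PreUP U A) := (inferInstance : StarRing (lp A ∞))

instance : SeminormedRing (PreUP U A) :=
  { (upAddSeminorm U A).toSeminormedAddCommGroup,
    (inferInstance : Ring (lp A ∞)) with
    norm_mul_le := ulim_mul_le }

instance : NormedAlgebra ℂ (PreUP U A) :=
  { (inferInstance : Algebra ℂ (lp A ∞)) with
    norm_smul_le := fun c x => le_of_eq (ulim_smul c x) }

instance : NormedStarGroup (PreUP U A) := ⟨fun x => (ulim_star x).le⟩

/-- The ultraproduct `∏_U A n`, realized as the separation quotient of `ℓ∞(A)`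
equipped with the seminorm `x ↦ lim_U ‖x n‖`. -/
abbrev UProd : Type _ := SeparationQuotient (PreUP U A)

instance : Star (SeparationQuotient (PreUP U A)) where
  star := SeparationQuotient.lift
    (fun x : PreUP U A => SeparationQuotient.mk (star x)) fun x y h => by
      try dsimp only
      refine SeparationQuotient.mk_eq_mk.2 ?_
      rw [Metric.inseparable_iff, dist_eq_norm] at h ⊢
      rwa [← star_sub, norm_star]

theorem mk_star (x : PreUP U A) :
    (SeparationQuotient.mk (star x) : UProd U A) = star (SeparationQuotient.mk x) := rfl

instance : StarRing (SeparationQuotient (PreUP U A)) where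
  star_involutive := by
    refine SeparationQuotient.surjective_mk.forall.2 fun x => ?_
    rw [← mk_star, ← mk_star, star_star]
  star_mul := by
    intro a b
    obtain ⟨x, rfl⟩ := SeparationQuotient.surjective_mk a
    obtain ⟨y, rfl⟩ := SeparationQuotient.surjective_mk b
    rw [← SeparationQuotient.mk_mul, ← mk_star, ← mk_star, ← mk_star,
      ← SeparationQuotient.mk_mul, star_mul]
  star_add := by
    intro a b
    obtain ⟨x, rfl⟩ := SeparationQuotient.surjective_mk a
    obtain ⟨y, rfl⟩ := SeparationQuotient.surjective_mk b
    rw [← SeparationQuotient.mk_add, ← mk_star, ← mk_star, ← mk_star,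
      ← SeparationQuotient.mk_add, star_add]

/-- The quotient map `π : ℓ∞(A) → ∏_U A n`. -/
def uproj (x : lp A ∞) : UProd U A := SeparationQuotient.mk (toPre U A x)

variable {U A}

theorem uproj_add (x y : lp A ∞) : uproj U A (x + y) = uproj U A x + uproj U A y := rfl

theorem uproj_mul (x y : lp A ∞) : uproj U A (x * y) = uproj U A x * uproj U A y := rfl

theorem uproj_star (x : lp A ∞) : uproj U A (star x) = star (uproj U A x) := rfl

theorem uproj_one : uproj U A 1 = 1 := rfl

theorem norm_uproj (x : lp A ∞) : ‖uproj U A x‖ = ulim U A x := rfl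

end UltraCStar



lemma spec_mem_Icc {B : Type*} [CStarAlgebra B] [Nontrivial B] (b : B) (hb : IsSelfAdjoint b)
    (t : ℝ) (ht : t ∈ spectrum ℝ b) : |t - 1| ≤ ‖b - 1‖ := by
  have h1 : t - 1 ∈ spectrum ℝ b - {(1 : ℝ)} := Set.sub_mem_sub ht rfl
  rw [spectrum.sub_singleton_eq] at h1
  have := spectrum.norm_le_norm_of_mem h1
  simpa [Algebra.algebraMap_eq_smul_one] using this

lemma unitary_approx {B : Type*} [CStarAlgebra B] [Nontrivial B] (x : B)
    (hb : ‖star x * x - 1‖ ≤ 4⁻¹) (hc : ‖x * star x - 1‖ ≤ 4⁻¹) :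
    ∃ w : B, star w * w = 1 ∧ w * star w = 1 ∧ ‖w - x‖ ≤ 2 * ‖x‖ * ‖star x * x - 1‖ := by
  set b := star x * x with hbdef
  set c := x * star x with hcdef
  have hbsa : IsSelfAdjoint b := IsSelfAdjoint.star_mul_self x
  have hcsa : IsSelfAdjoint c := IsSelfAdjoint.mul_star_self x
  have hspec : ∀ t ∈ spectrum ℝ b, (3/4 : ℝ) ≤ t ∧ t ≤ 5/4 := by
    intro t ht
    have := spec_mem_Icc b hbsa t ht
    have h2 : |t - 1| ≤ 4⁻¹ := this.trans hb
    rw [abs_le] at h2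
    constructor <;> linarith [h2.1, h2.2]
  have hspecc : ∀ t ∈ spectrum ℝ c, (3/4 : ℝ) ≤ t := by
    intro t ht
    have := spec_mem_Icc c hcsa t ht
    have h2 : |t - 1| ≤ 4⁻¹ := this.trans hc
    rw [abs_le] at h2
    linarith [h2.1]
  set f : ℝ → ℝ := fun t => (Real.sqrt t)⁻¹ with hfdef
  have hsq : ∀ t : ℝ, (3/4 : ℝ) ≤ t → Real.sqrt t ≠ 0 := fun t ht =>
    ne_of_gt (Real.sqrt_pos.2 (by linarith))
  have hfc : ContinuousOn f (spectrum ℝ b) :=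
    (Real.continuous_sqrt.continuousOn).inv₀ fun t ht => hsq t (hspec t ht).1
  set v := cfc f b with hvdef
  have hvsa : IsSelfAdjoint v := cfc_predicate f b
  -- v * b * v = 1
  have hkey : v * b * v = 1 := by
    have h1 : cfc (fun t : ℝ => f t * (t * f t)) b = v * (b * v) := by
      rw [cfc_mul f _ b hfc (by
        exact (continuousOn_id.mul hfc))]
      rw [cfc_mul (fun t : ℝ => t) f b (continuousOn_id) hfc, cfc_id' ℝ b]
    have h2 : cfc (fun t : ℝ => f t * (t * f t)) b = 1 := by
      rw [← cfc_one (R := ℝ) b]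
      apply cfc_congr
      intro t ht
      have h3 := (hspec t ht).1
      have hs : Real.sqrt t ≠ 0 := hsq t h3
      have hts : Real.sqrt t * Real.sqrt t = t := Real.mul_self_sqrt (by linarith)
      show f t * (t * f t) = 1
      simp only [hfdef]
      field_simp
      rw [sq, hts]
    rw [← mul_assoc] at h1
    rw [← h1, h2]
  -- v is a unit
  have hsqc : ContinuousOn Real.sqrt (spectrum ℝ b) := Real.continuous_sqrt.continuousOn
  have hfs : ∀ t ∈ spectrum ℝ b, f t * Real.sqrt t = 1 := by
    intro t ht
    simp only [hfdef]
    field_simp [hsq t (hspec t ht).1]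
  have hvs : v * cfc Real.sqrt b = 1 := by
    rw [← cfc_mul f Real.sqrt b hfc hsqc, ← cfc_one (R := ℝ) b]
    exact cfc_congr fun t ht => hfs t ht
  have hsv : cfc Real.sqrt b * v = 1 := by
    rw [← cfc_mul Real.sqrt f b hsqc hfc, ← cfc_one (R := ℝ) b]
    exact cfc_congr fun t ht => by rw [mul_comm]; exact hfs t ht
  have hvu : IsUnit v := ⟨⟨v, cfc Real.sqrt b, hvs, hsv⟩, rfl⟩
  -- x is a unit
  have hbinvc : ContinuousOn (fun t : ℝ => t⁻¹) (spectrum ℝ b) :=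
    continuousOn_id.inv₀ fun t ht => by have := (hspec t ht).1; positivity
  have hcinvc : ContinuousOn (fun t : ℝ => t⁻¹) (spectrum ℝ c) :=
    continuousOn_id.inv₀ fun t ht => by have := hspecc t ht; positivity
  have hbinv : cfc (fun t : ℝ => t⁻¹) b * b = 1 := by
    have h1 : cfc (fun t : ℝ => t⁻¹ * t) b = cfc (fun t : ℝ => t⁻¹) b * b := by
      rw [cfc_mul (fun t : ℝ => t⁻¹) (fun t : ℝ => t) b hbinvc continuousOn_id, cfc_id' ℝ b]
    rw [← h1, ← cfc_one (R := ℝ) b]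
    refine cfc_congr fun t ht => ?_
    have h3 := (hspec t ht).1
    field_simp
    rfl
  have hcinv : c * cfc (fun t : ℝ => t⁻¹) c = 1 := by
    have h1 : cfc (fun t : ℝ => t * t⁻¹) c = c * cfc (fun t : ℝ => t⁻¹) c := by
      rw [cfc_mul (fun t : ℝ => t) (fun t : ℝ => t⁻¹) c continuousOn_id hcinvc, cfc_id' ℝ c]
    rw [← h1, ← cfc_one (R := ℝ) c]
    refine cfc_congr fun t ht => ?_
    have h3 := hspecc t ht
    have : t ≠ 0 := by positivity
    field_simp
    rfl
  have hxl : (cfc (fun t : ℝ => t⁻¹) b * star x) * x = 1 := by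
    rw [mul_assoc, ← hbdef, hbinv]
  have hxr : x * (star x * cfc (fun t : ℝ => t⁻¹) c) = 1 := by
    rw [← mul_assoc, ← hcdef, hcinv]
  have hxeq : cfc (fun t : ℝ => t⁻¹) b * star x = star x * cfc (fun t : ℝ => t⁻¹) c := by
    calc cfc (fun t : ℝ => t⁻¹) b * star x
        = (cfc (fun t : ℝ => t⁻¹) b * star x) * (x * (star x * cfc (fun t : ℝ => t⁻¹) c)) := by
          rw [hxr, mul_one]
      _ = ((cfc (fun t : ℝ => t⁻¹) b * star x) * x) * (star x * cfc (fun t : ℝ => t⁻¹) c) := by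
          simp only [mul_assoc]
      _ = star x * cfc (fun t : ℝ => t⁻¹) c := by rw [hxl, one_mul]
  have hxu : IsUnit x :=
    ⟨⟨x, star x * cfc (fun t : ℝ => t⁻¹) c, hxr, by rw [← hxeq]; exact hxl⟩, rfl⟩
  -- the unitary w
  refine ⟨x * v, ?_, ?_, ?_⟩
  · have hst : star (x * v) = v * star x := by rw [star_mul, hvsa.star_eq]
    rw [hst]
    calc v * star x * (x * v) = v * (star x * x) * v := by
          simp only [mul_assoc]
      _ = v * b * v := by rw [← hbdef]
      _ = 1 := hkey
  · have hw1 : star (x * v) * (x * v) = 1 := by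
      have hst : star (x * v) = v * star x := by rw [star_mul, hvsa.star_eq]
      rw [hst]
      calc v * star x * (x * v) = v * (star x * x) * v := by
            simp only [mul_assoc]
        _ = v * b * v := by rw [← hbdef]
        _ = 1 := hkey
    obtain ⟨uw, huw⟩ := hxu.mul hvu
    have h5 : star (x * v) = ↑uw⁻¹ := by
      calc star (x * v) = star (x * v) * (↑uw * ↑uw⁻¹) := by rw [uw.mul_inv, mul_one]
        _ = (star (x * v) * (x * v)) * ↑uw⁻¹ := by rw [huw]; simp only [mul_assoc]
        _ = ↑uw⁻¹ := by rw [hw1, one_mul]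
    rw [h5, ← huw, uw.mul_inv]
  · -- norm estimate
    have hv1 : ‖v - 1‖ ≤ 2 * ‖b - 1‖ := by
      have hveq : v - 1 = cfc (fun t : ℝ => f t - 1) b := by
        rw [cfc_sub f (fun _ : ℝ => 1) b hfc continuousOn_const, cfc_const_one ℝ b]
      rw [hveq]
      refine norm_cfc_le (by positivity) fun t ht => ?_
      have h3 := (hspec t ht).1
      have ht0 : (0 : ℝ) < t := by linarith
      set s := Real.sqrt t with hsd
      have hs0 : 0 < s := Real.sqrt_pos.2 ht0
      have hts : s * s = t := Real.mul_self_sqrt ht0.le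
      have he1 : f t - 1 = (1 - s) / s := by
        simp only [hfdef]
        field_simp
        rw [hsd]; ring
      have he2 : ‖f t - 1‖ = |s - 1| / s := by
        rw [he1, Real.norm_eq_abs, abs_div, abs_of_pos hs0, abs_sub_comm]
      have he3 : |t - 1| = |s - 1| * (s + 1) := by
        have : t - 1 = (s - 1) * (s + 1) := by nlinarith [hts]
        rw [this, abs_mul, abs_of_pos (by linarith : (0:ℝ) < s + 1)]
      have hb1 : |t - 1| ≤ ‖b - 1‖ := spec_mem_Icc b hbsa t ht
      have goal1 : |s - 1| / s ≤ 2 * |t - 1| := by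
        rw [he3, div_le_iff₀ hs0]
        nlinarith [abs_nonneg (s - 1), hts, hs0,
          mul_nonneg (abs_nonneg (s - 1)) (by linarith : (0:ℝ) ≤ 2 * t - 1)]
      rw [he2]
      calc |s - 1| / s ≤ 2 * |t - 1| := goal1
        _ ≤ 2 * ‖b - 1‖ := by linarith
    have heq : x * v - x = x * (v - 1) := by rw [mul_sub, mul_one]
    rw [heq]
    calc ‖x * (v - 1)‖ ≤ ‖x‖ * ‖v - 1‖ := norm_mul_le _ _
      _ ≤ ‖x‖ * (2 * ‖b - 1‖) :=
          mul_le_mul_of_nonneg_left hv1 (norm_nonneg x)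
      _ = 2 * ‖x‖ * ‖b - 1‖ := by ring

/-- unitaries lift from the ultraproduct to `ℓ∞(A)`. -/
theorem stmt3 (U : Ultrafilter ℕ) (hU : (U : Filter ℕ) ≤ Filter.cofinite)
    (A : ℕ → Type*) [∀ n, CStarAlgebra (A n)] [∀ n, Nontrivial (A n)]
    (u : UProd U A) (hu₁ : star u * u = 1) (hu₂ : u * star u = 1) :
    ∃ w : lp A ∞, star w * w = 1 ∧ w * star w = 1 ∧ uproj U A w = u := by
  classical
  obtain ⟨x', hx'⟩ := SeparationQuotient.surjective_mk u
  set x : lp A ∞ := x' with hxdef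
  have hxu : uproj U A x = u := hx'
  -- the components of star x * x - 1 tend to 0 along U
  have hb : Tendsto (fun n => ‖star (x n) * x n - 1‖) (U : Filter ℕ) (𝓝 0) := by
    have h1 : uproj U A (star x * x - 1) = 0 := by
      have h2 : uproj U A (star x * x - 1) = star u * u - 1 := by
        rw [← hxu, ← uproj_star, ← uproj_mul]; rfl
      rw [h2, hu₁, sub_self]
    have h3 : ulim U A (star x * x - 1) = 0 := by
      have := congrArg (fun z => ‖z‖) h1
      simpa only [norm_uproj, norm_zero] using this
    have h4 := tendsto_ulim (U := U) (star x * x - 1)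
    rw [h3] at h4
    refine h4.congr fun n => ?_
    simp [lp.coeFn_sub, lp.infty_coeFn_mul, lp.coeFn_star, lp.infty_coeFn_one]
    rfl
  have hc : Tendsto (fun n => ‖x n * star (x n) - 1‖) (U : Filter ℕ) (𝓝 0) := by
    have h1 : uproj U A (x * star x - 1) = 0 := by
      have h2 : uproj U A (x * star x - 1) = u * star u - 1 := by
        rw [← hxu, ← uproj_star, ← uproj_mul]; rfl
      rw [h2, hu₂, sub_self]
    have h3 : ulim U A (x * star x - 1) = 0 := by
      have := congrArg (fun z => ‖z‖) h1
      simpa only [norm_uproj, norm_zero] using this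
    have h4 := tendsto_ulim (U := U) (x * star x - 1)
    rw [h3] at h4
    refine h4.congr fun n => ?_
    simp [lp.coeFn_sub, lp.infty_coeFn_mul, lp.coeFn_star, lp.infty_coeFn_one]
    rfl
  have hS : ∀ᶠ n in (U : Filter ℕ),
      ‖star (x n) * x n - 1‖ ≤ 4⁻¹ ∧ ‖x n * star (x n) - 1‖ ≤ 4⁻¹ :=
    (hb.eventually (eventually_le_nhds (by norm_num))).and
      (hc.eventually (eventually_le_nhds (by norm_num)))
  -- choose unitaries componentwise
  have hch : ∀ n, ∃ w : A n, star w * w = 1 ∧ w * star w = 1 ∧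
      ((‖star (x n) * x n - 1‖ ≤ 4⁻¹ ∧ ‖x n * star (x n) - 1‖ ≤ 4⁻¹) →
        ‖w - x n‖ ≤ 2 * ‖x n‖ * ‖star (x n) * x n - 1‖) := by
    intro n
    by_cases hn : ‖star (x n) * x n - 1‖ ≤ 4⁻¹ ∧ ‖x n * star (x n) - 1‖ ≤ 4⁻¹
    · obtain ⟨w, h1, h2, h3⟩ := unitary_approx (x n) hn.1 hn.2
      exact ⟨w, h1, h2, fun _ => h3⟩
    · exact ⟨1, by simp, by simp, fun h => absurd h hn⟩
  choose w' hw1 hw2 hw3 using hch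
  have hwnorm : ∀ n, ‖w' n‖ = 1 := fun n =>
    CStarRing.norm_coe_unitary (⟨w' n, hw1 n, hw2 n⟩ : unitary (A n))
  have hmem : Memℓp w' ∞ :=
    memℓp_infty ⟨1, by rintro r ⟨n, rfl⟩; exact le_of_eq (hwnorm n)⟩
  refine ⟨⟨w', hmem⟩, ?_, ?_, ?_⟩
  · apply lp.ext
    funext n
    have h1 : (star (⟨w', hmem⟩ : lp A ∞) * ⟨w', hmem⟩) n = star (w' n) * w' n := by
      simp [lp.infty_coeFn_mul, lp.coeFn_star]
    have h2 : (1 : lp A ∞) n = 1 := by simp [lp.infty_coeFn_one]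
    rw [h1, h2, hw1 n]
  · apply lp.ext
    funext n
    have h1 : ((⟨w', hmem⟩ : lp A ∞) * star ⟨w', hmem⟩) n = w' n * star (w' n) := by
      simp [lp.infty_coeFn_mul, lp.coeFn_star]
    have h2 : (1 : lp A ∞) n = 1 := by simp [lp.infty_coeFn_one]
    rw [h1, h2, hw2 n]
  · rw [← hxu]
    apply SeparationQuotient.mk_eq_mk.2
    rw [Metric.inseparable_iff]
    have hdist : dist (toPre U A ⟨w', hmem⟩) (toPre U A x)
        = ulim U A ((⟨w', hmem⟩ : lp A ∞) - x) := by rw [dist_eq_norm]; rfl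
    rw [hdist]
    obtain ⟨C, hC⟩ := (lp.memℓp x).bddAbove
    have hC0 : (0 : ℝ) ≤ C := le_trans (norm_nonneg (x 0)) (hC ⟨0, rfl⟩)
    apply ulim_eq
    have hbound : ∀ᶠ n in (U : Filter ℕ),
        ‖((⟨w', hmem⟩ : lp A ∞) - x) n‖ ≤ 2 * C * ‖star (x n) * x n - 1‖ := by
      filter_upwards [hS] with n hn
      have h1 : ((⟨w', hmem⟩ : lp A ∞) - x) n = w' n - x n := by
        simp [lp.coeFn_sub]
        rfl
      rw [h1]
      calc ‖w' n - x n‖ ≤ 2 * ‖x n‖ * ‖star (x n) * x n - 1‖ := hw3 n hn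
        _ ≤ 2 * C * ‖star (x n) * x n - 1‖ := by
            have hxn : ‖x n‖ ≤ C := hC ⟨n, rfl⟩
            have := norm_nonneg (star (x n) * x n - 1)
            nlinarith
    have hlim : Tendsto (fun n => 2 * C * ‖star (x n) * x n - 1‖)
        (U : Filter ℕ) (𝓝 0) := by
      simpa using hb.const_mul (2 * C)
    exact squeeze_zero' (Eventually.of_forall fun n => norm_nonneg _) hbound hlim
end
end

section
/- Let U be a free ultrafilter on ℕ and (A n) a sequence of unital complex C*-algebras. Let w ∈ ∏_U A n be a partial isometry (w w* w = w), and let p, p' ∈ ℓ∞(A) be projections such that w* w ≤ π(p) and w w* ≤ π(p'). Then there exists a partial isometry v ∈ ℓ∞(A) (v v* v = v) with π(v) = w, v* v ≤ p, and v v* ≤ p'. -/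
open Filter Topology ENNReal

noncomputable section

/-! ### Auxiliary real-analysis lemmas for the polar-type function -/

noncomputable def ffun (t : ℝ) : ℝ := min 1 (max 0 (4*t - 1)) / Real.sqrt (max t (3/4))

@[fun_prop]
lemma ffun_cont : Continuous ffun := by
  apply Continuous.div
  · fun_prop
  · fun_prop
  · intro t
    have : (0:ℝ) < Real.sqrt (max t (3/4)) := Real.sqrt_pos.2 (by positivity)
    positivity

lemma ffun_nonneg (t : ℝ) : 0 ≤ ffun t := by
  unfold ffun
  apply div_nonneg
  · rcases le_total (1:ℝ) (max 0 (4*t-1)) with h | h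
    · simp [min_eq_left h]
    · rw [min_eq_right h]; positivity
  · positivity

lemma ffun_le_two (t : ℝ) : ffun t ≤ 2 := by
  unfold ffun
  have h1 : min 1 (max 0 (4*t - 1)) ≤ 1 := min_le_left _ _
  have h2 : (1/2 : ℝ) ≤ Real.sqrt (max t (3/4)) := by
    rw [show (1/2:ℝ) = Real.sqrt (1/4) by
      rw [show (1/4:ℝ) = (1/2)^2 by norm_num, Real.sqrt_sq]; norm_num]
    exact Real.sqrt_le_sqrt (le_trans (by norm_num) (le_max_right _ _))
  calc min 1 (max 0 (4*t - 1)) / Real.sqrt (max t (3/4)) ≤ 1 / (1/2 : ℝ) := by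
        apply div_le_div₀ (by norm_num) h1 (by norm_num) h2
    _ = 2 := by norm_num

lemma ffun_eq_zero {t : ℝ} (h : t ≤ 1/4) : ffun t = 0 := by
  have : max 0 (4*t - 1) = 0 := max_eq_left (by linarith)
  simp [ffun, this]

lemma ffun_eq_big {t : ℝ} (h : 3/4 ≤ t) : ffun t = 1 / Real.sqrt t := by
  have h1 : min 1 (max 0 (4*t-1)) = 1 := min_eq_left (le_max_of_le_right (by linarith))
  have h2 : max t (3/4) = t := max_eq_left h
  simp [ffun, h1, h2]

lemma spec_dichotomy {t δ : ℝ} (hd : |t*t - t| ≤ δ) (hδ : δ < 1/16) : t ≤ 1/4 ∨ 3/4 ≤ t := by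
  by_contra hc
  push_neg at hc
  obtain ⟨h1, h2⟩ := hc
  rw [abs_le] at hd
  nlinarith [hd.1, hd.2]

lemma small_case {t δ : ℝ} (ht : t ≤ 1/4) (hd : |t*t - t| ≤ δ) : t ≤ 2*δ := by
  rw [abs_le] at hd
  rcases le_total t 0 with h | h
  · nlinarith [hd.1, hd.2]
  · nlinarith [hd.1, hd.2]

lemma big_case {t δ : ℝ} (ht : 3/4 ≤ t) (hd : |t*t - t| ≤ δ) : |1 - t| ≤ 2*δ := by
  rw [abs_le] at hd ⊢
  constructor <;> nlinarith [hd.1, hd.2]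

lemma hfun_small {t : ℝ} (h : t ≤ 1/4) : t * ffun t ^ 2 = 0 := by simp [ffun_eq_zero h]

lemma hfun_big {t : ℝ} (h : 3/4 ≤ t) : t * ffun t ^ 2 = 1 := by
  have ht : 0 < t := by linarith
  rw [ffun_eq_big h, div_pow, one_pow, Real.sq_sqrt ht.le]
  field_simp

lemma key_bound {t δ : ℝ} (hd : |t*t - t| ≤ δ) (hδ : δ < 1/16) :
    |(ffun t - 1) * t * (ffun t - 1)| ≤ 2*δ := by
  have hδ0 : 0 ≤ δ := le_trans (abs_nonneg _) hd
  have hre : (ffun t - 1) * t * (ffun t - 1) = t * (ffun t - 1)^2 := by ring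
  rw [hre]
  rcases spec_dichotomy hd hδ with h | h
  · rw [ffun_eq_zero h]
    have h2 := small_case h hd
    rw [abs_le]
    constructor
    · nlinarith [abs_le.1 hd]
    · nlinarith
  · have ht : (0:ℝ) < t := by linarith
    have hst : Real.sqrt t > 0 := Real.sqrt_pos.2 ht
    have hkey : t * (ffun t - 1)^2 = (1 - Real.sqrt t)^2 := by
      rw [ffun_eq_big h]
      have h' : Real.sqrt t * Real.sqrt t = t := Real.mul_self_sqrt ht.le
      field_simp
      rw [Real.sq_sqrt ht.le]
    rw [hkey]
    have h1t : |1 - t| ≤ 2*δ := big_case h hd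
    have hs1 : |1 - Real.sqrt t| ≤ |1 - t| := by
      have : 1 - t = (1 - Real.sqrt t) * (1 + Real.sqrt t) := by nlinarith [Real.sq_sqrt ht.le]
      rw [this, abs_mul]
      nth_rewrite 1 [← mul_one |1 - Real.sqrt t|]
      apply mul_le_mul_of_nonneg_left _ (abs_nonneg _)
      rw [abs_of_nonneg (by positivity)]
      linarith
    have h2 : |1 - Real.sqrt t| ≤ 2*δ := hs1.trans h1t
    have habs : (1 - Real.sqrt t)^2 ≤ (2*δ)^2 := by
      calc (1 - Real.sqrt t)^2 = |1 - Real.sqrt t|^2 := (sq_abs _).symm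
        _ ≤ (2*δ)^2 := pow_le_pow_left₀ (abs_nonneg _) h2 2
    rw [abs_of_nonneg (sq_nonneg _)]
    nlinarith

lemma fh_eq {t δ : ℝ} (hd : |t*t - t| ≤ δ) (hδ : δ < 1/16) :
    ffun t * (t * ffun t ^2) = ffun t := by
  rcases spec_dichotomy hd hδ with h | h
  · simp [ffun_eq_zero h]
  · rw [hfun_big h, mul_one]

lemma hh_eq {t δ : ℝ} (hd : |t*t - t| ≤ δ) (hδ : δ < 1/16) :
    (t * ffun t ^2) * (t * ffun t ^2) = t * ffun t ^2 := by
  rcases spec_dichotomy hd hδ with h | h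
  · simp [hfun_small h]
  · simp [hfun_big h]

/-! ### Componentwise lemmas in a unital C⋆-algebra -/

section ringlem
variable {B : Type*} [Ring B] [StarRing B]

lemma proj_sub (P Q : B) (hP : star P = P) (hP2 : P*P = P) (hQs : star Q = Q)
    (hQ2 : Q*Q = Q) (hPQ : P*Q = Q) :
    P - Q = star ((1-Q)*P) * ((1-Q)*P) := by
  have hQP : Q * P = Q := by
    have h := congrArg star hPQ; rwa [star_mul, hQs, hP] at h
  have h1 : star ((1-Q)*P) = P * (1-Q) := by
    rw [star_mul, hP, star_sub, star_one, hQs]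
  have h2 : (1-Q)*(1-Q) = (1-Q) := by
    calc (1-Q)*(1-Q) = 1 - Q - Q + Q*Q := by noncomm_ring
      _ = 1 - Q := by rw [hQ2]; abel
  rw [h1]
  calc P - Q = P*P - (P*Q)*P := by rw [hP2, hPQ, hQP]
    _ = (P * ((1-Q)*(1-Q))) * P := by rw [h2]; noncomm_ring
    _ = P*(1-Q) * ((1-Q)*P) := by noncomm_ring

lemma ring_id (x c p : B) (hp : p * p = p) (hps : star p = p) :
    star (x * (p-1)) * (x * (p-1)) + star (c * (p-1)) * (c * (p-1))
      = -((p-1) * (p - star x * x - star c * c) * (p-1)) := by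
  have h1 : star (x * (p-1)) = (p-1) * star x := by
    rw [star_mul, star_sub, star_one, hps]
  have h2 : star (c * (p-1)) = (p-1) * star c := by
    rw [star_mul, star_sub, star_one, hps]
  rw [h1, h2]
  have h0 : (p-1) * p * (p-1) = 0 := by rw [sub_mul, hp, one_mul, sub_self, zero_mul]
  have key : (p-1) * (p - star x * x - star c * c) * (p-1)
      + ((p-1) * star x * (x * (p-1)) + (p-1) * star c * (c * (p-1)))
      = (p-1) * p * (p-1) := by noncomm_ring
  rw [h0] at key
  exact eq_neg_of_add_eq_zero_right key

end ringlem

section comp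
variable {B : Type*} [CStarAlgebra B] [Nontrivial B]

omit [Nontrivial B] in
lemma norm_le_of_sum_eq (u m R : B) (h : star u * u + star m * m = R) :
    ‖star u * u‖ ≤ ‖R‖ := by
  let _ := CStarAlgebra.spectralOrder B
  have _ := CStarAlgebra.spectralOrderedRing B
  refine CStarAlgebra.norm_le_norm_of_nonneg_of_le (star_mul_self_nonneg u) ?_
  rw [← h]
  exact le_add_of_nonneg_right (star_mul_self_nonneg m)

set_option maxHeartbeats 1000000 in
theorem comp_lem (X P P' : B) (hP : star P = P) (hP2 : P*P = P)
    (hP' : star P' = P') (hP'2 : P'*P' = P')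
    (hXP : X * P = X) (hP'X : P' * X = X)
    (hd : ‖star X * X * (star X * X) - star X * X‖ < 1/16) :
    X * cfc ffun (star X * X) * star (X * cfc ffun (star X * X)) * (X * cfc ffun (star X * X))
        = X * cfc ffun (star X * X) ∧
    ‖X * cfc ffun (star X * X) - X‖^2
        ≤ 2 * ‖star X * X * (star X * X) - star X * X‖ ∧
    ‖X * cfc ffun (star X * X)‖ ≤ 2 * ‖X‖ ∧
    P - star (X * cfc ffun (star X * X)) * (X * cfc ffun (star X * X))
      = star ((1 - star (X * cfc ffun (star X * X)) * (X * cfc ffun (star X * X))) * P)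
        * ((1 - star (X * cfc ffun (star X * X)) * (X * cfc ffun (star X * X))) * P) ∧
    P' - (X * cfc ffun (star X * X)) * star (X * cfc ffun (star X * X))
      = star ((1 - (X * cfc ffun (star X * X)) * star (X * cfc ffun (star X * X))) * P')
        * ((1 - (X * cfc ffun (star X * X)) * star (X * cfc ffun (star X * X))) * P') := by
  set a := star X * X with hadef
  set δ := ‖a * a - a‖ with hδdef
  have hδ0 : (0:ℝ) ≤ δ := norm_nonneg _
  have ha : IsSelfAdjoint a := IsSelfAdjoint.star_mul_self X
  have hst : ∀ t ∈ spectrum ℝ a, |t*t - t| ≤ δ := by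
    intro t ht
    have h1 : a * a - a = cfc (fun t : ℝ => t*t - t) a := by
      rw [cfc_sub _ _ a, cfc_mul _ _ a, cfc_id' ℝ a]
    have h2 : (t*t - t) ∈ spectrum ℝ (a*a - a) := by
      rw [h1, cfc_map_spectrum (fun t : ℝ => t*t - t) a]
      exact ⟨t, ht, rfl⟩
    simpa using spectrum.norm_le_norm_of_mem h2
  set F := cfc ffun a with hFdef
  set V := X * F with hVdef
  have hFs : star F = F := (cfc_predicate ffun a).star_eq
  have hQ : star V * V = cfc (fun t : ℝ => t * ffun t ^ 2) a := by
    have h1 : star V * V = F * a * F := by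
      rw [hVdef, star_mul, hFs, hadef]; noncomm_ring
    have e1 : cfc (fun t : ℝ => t * ffun t ^ 2) a = cfc (fun t : ℝ => ffun t * t * ffun t) a :=
      cfc_congr fun t _ => by ring
    have e2 : cfc (fun t : ℝ => ffun t * t * ffun t) a
        = cfc (fun t : ℝ => ffun t * t) a * cfc ffun a := cfc_mul _ _ a
    have e3 : cfc (fun t : ℝ => ffun t * t) a
        = cfc ffun a * cfc (fun t : ℝ => t) a := cfc_mul _ _ a
    rw [h1, e1, e2, e3, cfc_id' ℝ a]
  have hC1 : V * star V * V = V := by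
    have h1 : V * star V * V = V * (star V * V) := by noncomm_ring
    have e2 : cfc (fun t : ℝ => ffun t * (t * ffun t ^ 2)) a
        = cfc ffun a * cfc (fun t : ℝ => t * ffun t ^ 2) a := cfc_mul _ _ a
    have e3 : cfc (fun t : ℝ => ffun t * (t * ffun t ^ 2)) a = cfc ffun a :=
      cfc_congr fun t ht => fh_eq (hst t ht) hd
    calc V * star V * V = V * (star V * V) := h1
      _ = X * (F * cfc (fun t : ℝ => t * ffun t ^ 2) a) := by rw [hQ, hVdef, mul_assoc]
      _ = X * cfc ffun a := by rw [hFdef, ← e2, e3]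
      _ = V := by rw [hVdef, hFdef]
  refine ⟨hC1, ?_, ?_, ?_, ?_⟩
  · have h1 : V - X = X * (F - 1) := by rw [hVdef, mul_sub, mul_one]
    have hF1s : star (F - 1) = F - 1 := by rw [star_sub, star_one, hFs]
    have h2 : star (V - X) * (V - X) = (F - 1) * a * (F - 1) := by
      rw [h1, star_mul, hF1s, hadef]; noncomm_ring
    have e1 : cfc (fun t : ℝ => (ffun t - 1) * t * (ffun t - 1)) a
        = cfc (fun t : ℝ => (ffun t - 1) * t) a * cfc (fun t : ℝ => ffun t - 1) a :=
      cfc_mul _ _ a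
    have e2 : cfc (fun t : ℝ => (ffun t - 1) * t) a
        = cfc (fun t : ℝ => ffun t - 1) a * cfc (fun t : ℝ => t) a := cfc_mul _ _ a
    have e3 : cfc (fun t : ℝ => ffun t - 1) a = cfc ffun a - cfc (fun _ : ℝ => 1) a :=
      cfc_sub _ _ a
    have e4 : cfc (fun _ : ℝ => (1:ℝ)) a = 1 := cfc_one ℝ a
    have h3 : (F - 1) * a * (F - 1) = cfc (fun t : ℝ => (ffun t - 1) * t * (ffun t - 1)) a := by
      rw [e1, e2, e3, e4, cfc_id' ℝ a, hFdef]
    have h4 : ‖(F - 1) * a * (F - 1)‖ ≤ 2 * δ := by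
      rw [h3]
      exact norm_cfc_le (by positivity) fun t ht => by
        rw [Real.norm_eq_abs]; exact key_bound (hst t ht) hd
    have h5 : ‖V - X‖^2 = ‖star (V - X) * (V - X)‖ := by
      rw [CStarRing.norm_star_mul_self]; ring
    rw [h5, h2]; exact h4
  · have h1 : ‖F‖ ≤ 2 := by
      refine norm_cfc_le (by norm_num) fun t _ => ?_
      rw [Real.norm_eq_abs, abs_le]
      exact ⟨by linarith [ffun_nonneg t], ffun_le_two t⟩
    calc ‖V‖ ≤ ‖X‖ * ‖F‖ := norm_mul_le _ _
      _ ≤ ‖X‖ * 2 := mul_le_mul_of_nonneg_left h1 (norm_nonneg _)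
      _ = 2 * ‖X‖ := by ring
  · have hQs : star (star V * V) = star V * V := (IsSelfAdjoint.star_mul_self V).star_eq
    have hQ2 : (star V * V) * (star V * V) = star V * V := by
      rw [hQ]
      have e1 : cfc (fun t : ℝ => (t * ffun t ^ 2) * (t * ffun t ^ 2)) a
          = cfc (fun t : ℝ => t * ffun t ^ 2) a * cfc (fun t : ℝ => t * ffun t ^ 2) a :=
        cfc_mul _ _ a
      rw [← e1]
      exact cfc_congr fun t ht => hh_eq (hst t ht) hd
    have hPa : P * a = a := by
      have hPsX : P * star X = star X := by
        have h := congrArg star hXP; rwa [star_mul, hP] at h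
      rw [hadef, ← mul_assoc, hPsX]
    have hPQ : P * (star V * V) = star V * V := by
      rw [hQ]
      have e1 : cfc (fun t : ℝ => t * ffun t ^ 2) a
          = cfc (fun t : ℝ => t) a * cfc (fun t : ℝ => ffun t ^ 2) a := cfc_mul _ _ a
      rw [e1, cfc_id' ℝ a, ← mul_assoc, hPa]
    exact proj_sub P (star V * V) hP hP2 hQs hQ2 hPQ
  · have hEs : star (V * star V) = V * star V := (IsSelfAdjoint.mul_star_self V).star_eq
    have hE2 : (V * star V) * (V * star V) = V * star V := by
      calc (V * star V) * (V * star V) = (V * star V * V) * star V := by noncomm_ring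
        _ = V * star V := by rw [hC1]
    have hP'V : P' * V = V := by rw [hVdef, ← mul_assoc, hP'X]
    have hP'E : P' * (V * star V) = V * star V := by rw [← mul_assoc, hP'V]
    exact proj_sub P' (V * star V) hP' hP'2 hEs hE2 hP'E

end comp

/-! ### Further lemmas on the ultraproduct seminorm -/

section UltraAux

variable {U : Ultrafilter ℕ} {A : ℕ → Type*} [∀ n, CStarAlgebra (A n)] [∀ n, Nontrivial (A n)]

theorem ulim_nonneg (x : lp A ∞) : 0 ≤ ulim U A x :=
  ge_of_tendsto (tendsto_ulim x) (Filter.Eventually.of_forall fun n => norm_nonneg _)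

theorem uproj_eq_iff (x y : lp A ∞) :
    uproj U A x = uproj U A y ↔ ulim U A (x - y) = 0 := by
  rw [uproj, uproj, SeparationQuotient.mk_eq_mk, Metric.inseparable_iff, dist_eq_norm]
  exact Iff.rfl

theorem uproj_sub (x y : lp A ∞) : uproj U A (x - y) = uproj U A x - uproj U A y :=
  SeparationQuotient.mk_sub _ _

theorem tendsto_coord_norm_zero {r : lp A ∞} (hr : ulim U A r = 0) :
    Filter.Tendsto (fun n => ‖r n‖) (U : Filter ℕ) (𝓝 0) := by
  have := tendsto_ulim (U := U) r
  rwa [hr] at this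

theorem ulim_zero_of_sum (u m R : lp A ∞) (hid : star u * u + star m * m = R)
    (hR : Filter.Tendsto (fun n => ‖R n‖) (U : Filter ℕ) (𝓝 0)) : ulim U A u = 0 := by
  have hb : ∀ n, ‖u n‖^2 ≤ ‖R n‖ := by
    intro n
    have h1 : star (u n) * u n + star (m n) * m n = R n := by
      have := congrArg (fun z : lp A ∞ => z n) hid
      exact this
    have h2 : ‖star (u n) * u n‖ ≤ ‖R n‖ := norm_le_of_sum_eq _ _ _ h1
    calc ‖u n‖^2 = ‖star (u n) * u n‖ := by rw [CStarRing.norm_star_mul_self]; ring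
      _ ≤ ‖R n‖ := h2
  have h1 : Filter.Tendsto (fun n => ‖u n‖^2) (U : Filter ℕ) (𝓝 ((ulim U A u)^2)) :=
    (tendsto_ulim u).pow 2
  have h2 : (ulim U A u)^2 ≤ 0 :=
    le_of_tendsto_of_tendsto h1 hR (Filter.Eventually.of_forall hb)
  have h3 : 0 ≤ ulim U A u := ulim_nonneg u
  nlinarith

theorem ulim_zero_of_sq_le {u : lp A ∞} {g : ℕ → ℝ}
    (h : ∀ᶠ n in (U : Filter ℕ), ‖u n‖^2 ≤ g n)
    (hg : Filter.Tendsto g (U : Filter ℕ) (𝓝 0)) : ulim U A u = 0 := by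
  have h1 : Filter.Tendsto (fun n => ‖u n‖^2) (U : Filter ℕ) (𝓝 ((ulim U A u)^2)) :=
    (tendsto_ulim u).pow 2
  have h2 : (ulim U A u)^2 ≤ 0 := le_of_tendsto_of_tendsto h1 hg h
  have h3 : 0 ≤ ulim U A u := ulim_nonneg u
  nlinarith

end UltraAux


set_option maxHeartbeats 2000000 in
/-- partial isometries lift from the ultraproduct to `ℓ∞(A)`, with control
of the initial and final projections.  Here `a ≤ b` for selfadjoint elements is expressed
by `∃ y, b - a = star y * y`. -/
theorem stmt4 (U : Ultrafilter ℕ) (hU : (U : Filter ℕ) ≤ Filter.cofinite)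
    (A : ℕ → Type*) [∀ n, CStarAlgebra (A n)] [∀ n, Nontrivial (A n)]
    (w : UProd U A) (hw : w * star w * w = w)
    (p p' : lp A ∞)
    (hp_star : star p = p) (hp_idem : p * p = p)
    (hp'_star : star p' = p') (hp'_idem : p' * p' = p')
    (h_init : ∃ y : UProd U A, uproj U A p - star w * w = star y * y)
    (h_fin : ∃ y : UProd U A, uproj U A p' - w * star w = star y * y) :
    ∃ v : lp A ∞, v * star v * v = v ∧ uproj U A v = w ∧
      (∃ z : lp A ∞, p - star v * v = star z * z) ∧
      (∃ z : lp A ∞, p' - v * star v = star z * z) := by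
  classical
  -- lift `w` to `x : ℓ∞(A)`
  obtain ⟨x₁, hx₀⟩ := SeparationQuotient.surjective_mk w
  set x₀ : lp A ∞ := x₁ with hx₀def
  have hx : uproj U A x₀ = w := hx₀
  -- extract the positivity data
  obtain ⟨y₁, hy₁⟩ := h_init
  obtain ⟨c₁', rfl⟩ := SeparationQuotient.surjective_mk y₁
  set c₁ : lp A ∞ := c₁' with hc₁def
  obtain ⟨y₂, hy₂⟩ := h_fin
  obtain ⟨c₂', rfl⟩ := SeparationQuotient.surjective_mk y₂
  set c₂ : lp A ∞ := c₂' with hc₂def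
  have h2 : star w * w = uproj U A (star x₀ * x₀) := by
    rw [← hx, ← uproj_star, ← uproj_mul]
  have h2' : w * star w = uproj U A (x₀ * star x₀) := by
    rw [← hx, ← uproj_star, ← uproj_mul]
  have hy₁' : uproj U A (p - star x₀ * x₀) = uproj U A (star c₁ * c₁) := by
    rw [uproj_sub, ← h2, hy₁, ← mk_star, ← SeparationQuotient.mk_mul]
    rfl
  have hy₂' : uproj U A (p' - x₀ * star x₀) = uproj U A (star c₂ * c₂) := by
    rw [uproj_sub, ← h2', hy₂, ← mk_star, ← SeparationQuotient.mk_mul]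
    rfl
  have hr₁ : ulim U A (p - star x₀ * x₀ - star c₁ * c₁) = 0 := (uproj_eq_iff _ _).1 hy₁'
  have hr₂ : ulim U A (p' - x₀ * star x₀ - star c₂ * c₂) = 0 := (uproj_eq_iff _ _).1 hy₂'
  -- `x₀ * p` is close to `x₀`
  have key₁ : ulim U A (x₀ * (p - 1)) = 0 := by
    refine ulim_zero_of_sum _ (c₁ * (p - 1))
      (-((p-1) * (p - star x₀ * x₀ - star c₁ * c₁) * (p-1)))
      (ring_id x₀ c₁ p hp_idem hp_star) ?_
    set r := p - star x₀ * x₀ - star c₁ * c₁ with hrdef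
    have hb : ∀ n, ‖(-((p-1) * r * (p-1))) n‖ ≤ ‖p - 1‖ * ‖r n‖ * ‖p - 1‖ := by
      intro n
      have h1 : ‖(-((p-1) * r * (p-1))) n‖ = ‖(p-1) n * r n * (p-1) n‖ := by
        show ‖-(((p-1) * r * (p-1)) n)‖ = _; rw [norm_neg]; rfl
      rw [h1]
      calc ‖(p-1) n * r n * (p-1) n‖ ≤ ‖(p-1) n * r n‖ * ‖(p-1) n‖ := norm_mul_le _ _
        _ ≤ (‖(p-1) n‖ * ‖r n‖) * ‖(p-1) n‖ :=
            mul_le_mul_of_nonneg_right (norm_mul_le _ _) (norm_nonneg _)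
        _ ≤ (‖p-1‖ * ‖r n‖) * ‖p - 1‖ := by
            have e1 : ‖(p-1) n‖ ≤ ‖p - 1‖ := lp.norm_apply_le_norm (by norm_num) _ n
            have e2 : 0 ≤ ‖r n‖ := norm_nonneg _
            have e3 : 0 ≤ ‖(p-1) n‖ := norm_nonneg _
            exact mul_le_mul (mul_le_mul_of_nonneg_right e1 e2) e1 e3
              (by positivity)
        _ = ‖p - 1‖ * ‖r n‖ * ‖p - 1‖ := by ring
    have hg : Filter.Tendsto (fun n => ‖p - 1‖ * ‖r n‖ * ‖p - 1‖) (U : Filter ℕ) (𝓝 0) := by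
      have := (tendsto_coord_norm_zero hr₁).const_mul ‖p - 1‖
      have h2 := this.mul_const ‖p - 1‖
      simpa using h2
    exact squeeze_zero (fun n => norm_nonneg _) hb hg
  have key₂ : ulim U A (star x₀ * (p' - 1)) = 0 := by
    have hid := ring_id (star x₀) c₂ p' hp'_idem hp'_star
    rw [star_star] at hid
    refine ulim_zero_of_sum _ (c₂ * (p' - 1))
      (-((p'-1) * (p' - x₀ * star x₀ - star c₂ * c₂) * (p'-1))) hid ?_
    set r := p' - x₀ * star x₀ - star c₂ * c₂ with hrdef
    have hb : ∀ n, ‖(-((p'-1) * r * (p'-1))) n‖ ≤ ‖p' - 1‖ * ‖r n‖ * ‖p' - 1‖ := by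
      intro n
      have h1 : ‖(-((p'-1) * r * (p'-1))) n‖ = ‖(p'-1) n * r n * (p'-1) n‖ := by
        show ‖-(((p'-1) * r * (p'-1)) n)‖ = _; rw [norm_neg]; rfl
      rw [h1]
      calc ‖(p'-1) n * r n * (p'-1) n‖ ≤ ‖(p'-1) n * r n‖ * ‖(p'-1) n‖ := norm_mul_le _ _
        _ ≤ (‖(p'-1) n‖ * ‖r n‖) * ‖(p'-1) n‖ :=
            mul_le_mul_of_nonneg_right (norm_mul_le _ _) (norm_nonneg _)
        _ ≤ (‖p'-1‖ * ‖r n‖) * ‖p' - 1‖ := by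
            have e1 : ‖(p'-1) n‖ ≤ ‖p' - 1‖ := lp.norm_apply_le_norm (by norm_num) _ n
            have e2 : 0 ≤ ‖r n‖ := norm_nonneg _
            have e3 : 0 ≤ ‖(p'-1) n‖ := norm_nonneg _
            exact mul_le_mul (mul_le_mul_of_nonneg_right e1 e2) e1 e3 (by positivity)
        _ = ‖p' - 1‖ * ‖r n‖ * ‖p' - 1‖ := by ring
    have hg : Filter.Tendsto (fun n => ‖p' - 1‖ * ‖r n‖ * ‖p' - 1‖) (U : Filter ℕ) (𝓝 0) := by
      have := (tendsto_coord_norm_zero hr₂).const_mul ‖p' - 1‖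
      have h2 := this.mul_const ‖p' - 1‖
      simpa using h2
    exact squeeze_zero (fun n => norm_nonneg _) hb hg
  -- the compressed lift
  set x' : lp A ∞ := p' * x₀ * p with hx'def
  have hx'x : ulim U A (x' - x₀) = 0 := by
    have hdecomp : x' - x₀ = p' * (x₀ * (p - 1)) + star (star x₀ * (p' - 1)) := by
      have h1 : star (star x₀ * (p' - 1)) = (p' - 1) * x₀ := by
        rw [star_mul, star_star, star_sub, star_one, hp'_star]
      rw [h1, hx'def]
      noncomm_ring
    have h2 : ulim U A (x' - x₀) ≤ 0 := by
      calc ulim U A (x' - x₀)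
          ≤ ulim U A (p' * (x₀ * (p - 1))) + ulim U A (star (star x₀ * (p' - 1))) := by
            rw [hdecomp]; exact ulim_add_le _ _
        _ ≤ ulim U A p' * ulim U A (x₀ * (p - 1)) + ulim U A (star x₀ * (p' - 1)) := by
            rw [ulim_star]
            exact add_le_add_left (ulim_mul_le _ _) _
        _ = 0 := by rw [key₁, key₂, mul_zero, add_zero]
    exact le_antisymm h2 (ulim_nonneg _)
  have hx' : uproj U A x' = w := by
    rw [(uproj_eq_iff x' x₀).2 hx'x, hx]
  -- the element `a = x'* x'` and the smallness of `a² - a`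
  set a : lp A ∞ := star x' * x' with hadef
  have hqq : star w * w * (star w * w) = star w * w := by
    calc star w * w * (star w * w) = star w * (w * star w * w) := by noncomm_ring
      _ = star w * w := by rw [hw]
  have haz : ulim U A (a * a - a) = 0 := by
    have h1 : uproj U A (a * a - a) = 0 := by
      rw [uproj_sub, uproj_mul, hadef, uproj_mul, uproj_star, hx', hqq, sub_self]
    have h2 : ulim U A (a * a - a) = ‖uproj U A (a * a - a)‖ := (norm_uproj _).symm
    rw [h2, h1, norm_zero]
  have hδ : Filter.Tendsto (fun n => ‖(a * a - a) n‖) (U : Filter ℕ) (𝓝 0) :=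
    tendsto_coord_norm_zero haz
  have hcoord : ∀ n, (a * a - a) n
      = star (x' n) * x' n * (star (x' n) * x' n) - star (x' n) * x' n := by
    intro n; rfl
  set δs : ℕ → ℝ :=
    fun n => ‖star (x' n) * x' n * (star (x' n) * x' n) - star (x' n) * x' n‖ with hδsdef
  have hδs : Filter.Tendsto δs (U : Filter ℕ) (𝓝 0) := by
    refine hδ.congr fun n => ?_
    rw [hcoord n]
  -- componentwise hypotheses
  have hpn_star : ∀ n, star (p n) = p n := by
    intro n
    calc star (p n) = (star p) n := by simp
      _ = p n := by rw [hp_star]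
  have hpn_idem : ∀ n, p n * p n = p n := by
    intro n
    calc p n * p n = (p * p) n := by simp
      _ = p n := by rw [hp_idem]
  have hp'n_star : ∀ n, star (p' n) = p' n := by
    intro n
    calc star (p' n) = (star p') n := by simp
      _ = p' n := by rw [hp'_star]
  have hp'n_idem : ∀ n, p' n * p' n = p' n := by
    intro n
    calc p' n * p' n = (p' * p') n := by simp
      _ = p' n := by rw [hp'_idem]
  have hx'p : ∀ n, x' n * p n = x' n := by
    intro n
    have h1 : x' * p = x' := by
      rw [hx'def, mul_assoc, hp_idem]
    calc x' n * p n = (x' * p) n := by simp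
      _ = x' n := by rw [h1]
  have hp'x' : ∀ n, p' n * x' n = x' n := by
    intro n
    have h1 : p' * x' = x' := by
      rw [hx'def, ← mul_assoc, ← mul_assoc, hp'_idem]
    calc p' n * x' n = (p' * x') n := by simp
      _ = x' n := by rw [h1]
  -- define the lift `v`
  set vf : ∀ n, A n := fun n =>
    if δs n < 1/16 then x' n * cfc ffun (star (x' n) * x' n) else 0 with hvfdef
  have hvf_bound : ∀ n, ‖vf n‖ ≤ 2 * ‖x'‖ := by
    intro n
    simp only [hvfdef]
    by_cases hn : δs n < 1/16
    · rw [if_pos hn]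
      obtain ⟨-, -, h3, -, -⟩ := comp_lem (x' n) (p n) (p' n) (hpn_star n) (hpn_idem n)
        (hp'n_star n) (hp'n_idem n) (hx'p n) (hp'x' n) hn
      refine h3.trans ?_
      have := lp.norm_apply_le_norm (E := A) (p := ∞) (by norm_num) x' n
      linarith
    · rw [if_neg hn]
      simp only [norm_zero]
      positivity
  set v : lp A ∞ := ⟨vf, memℓp_infty ⟨2 * ‖x'‖, by rintro s ⟨n, rfl⟩; exact hvf_bound n⟩⟩
    with hvdef
  have hv_coord : ∀ n, v n = vf n := fun n => rfl
  have hv_good : ∀ n, δs n < 1/16 → v n = x' n * cfc ffun (star (x' n) * x' n) := by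
    intro n hn
    rw [hv_coord n]
    simp only [hvfdef]
    exact if_pos hn
  have hv_bad : ∀ n, ¬ δs n < 1/16 → v n = 0 := by
    intro n hn
    rw [hv_coord n]
    simp only [hvfdef]
    exact if_neg hn
  refine ⟨v, ?_, ?_, ?_, ?_⟩
  -- v is a partial isometry
  · ext n
    have hco : (v * star v * v) n = v n * star (v n) * v n := by simp
    rw [hco]
    by_cases hn : δs n < 1/16
    · rw [hv_good n hn]
      exact (comp_lem (x' n) (p n) (p' n) (hpn_star n) (hpn_idem n)
        (hp'n_star n) (hp'n_idem n) (hx'p n) (hp'x' n) hn).1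
    · rw [hv_bad n hn]
      simp
  -- π(v) = w
  · have hvx' : ulim U A (v - x') = 0 := by
      refine ulim_zero_of_sq_le (g := fun n => 2 * δs n) ?_ (by simpa using hδs.const_mul 2)
      have hS : ∀ᶠ n in (U : Filter ℕ), δs n < 1/16 :=
        hδs (Iio_mem_nhds (by norm_num))
      refine hS.mono fun n hn => ?_
      have hco : (v - x') n = v n - x' n := by simp
      rw [hco, hv_good n hn]
      exact (comp_lem (x' n) (p n) (p' n) (hpn_star n) (hpn_idem n)
        (hp'n_star n) (hp'n_idem n) (hx'p n) (hp'x' n) hn).2.1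
    rw [(uproj_eq_iff v x').2 hvx']
    exact hx'
  -- initial projection dominated by p
  · refine ⟨(1 - star v * v) * p, ?_⟩
    ext n
    have hl : (p - star v * v) n = p n - star (v n) * v n := by rfl
    have hr : (star ((1 - star v * v) * p) * ((1 - star v * v) * p)) n
        = star ((1 - star (v n) * v n) * p n) * ((1 - star (v n) * v n) * p n) := by rfl
    rw [hl, hr]
    by_cases hn : δs n < 1/16
    · rw [hv_good n hn]
      exact (comp_lem (x' n) (p n) (p' n) (hpn_star n) (hpn_idem n)
        (hp'n_star n) (hp'n_idem n) (hx'p n) (hp'x' n) hn).2.2.2.1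
    · rw [hv_bad n hn]
      simp [hpn_star n, hpn_idem n]
  -- final projection dominated by p'
  · refine ⟨(1 - v * star v) * p', ?_⟩
    ext n
    have hl : (p' - v * star v) n = p' n - v n * star (v n) := by rfl
    have hr : (star ((1 - v * star v) * p') * ((1 - v * star v) * p')) n
        = star ((1 - v n * star (v n)) * p' n) * ((1 - v n * star (v n)) * p' n) := by rfl
    rw [hl, hr]
    by_cases hn : δs n < 1/16
    · rw [hv_good n hn]
      exact (comp_lem (x' n) (p n) (p' n) (hpn_star n) (hpn_idem n)
        (hp'n_star n) (hp'n_idem n) (hx'p n) (hp'x' n) hn).2.2.2.2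
    · rw [hv_bad n hn]
      simp [hp'n_star n, hp'n_idem n]
end
end

section
/- Let U be a free ultrafilter on ℕ, N : ℕ → ℕ with N n ≥ 1 for all n, and A n := M_{N n}(ℂ). Suppose {n ∈ ℕ : N n is prime} ∈ U and, for every k ∈ ℕ, {n ∈ ℕ : N n > k} ∈ U. Then for every m ≥ 2 there is no unital *-homomorphism from M_m(ℂ) into the ultraproduct ∏_U A n. -/
open Filter Topology ENNReal

noncomputable section

open scoped Matrix.Norms.L2Operator in
noncomputable instance (k : ℕ) : CStarAlgebra (Matrix (Fin k) (Fin k) ℂ) where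


section CStarHelpers
variable {A : Type*} [CStarAlgebra A]

lemma up_proj_norm_le_one {P : A} (h1 : IsIdempotentElem P) (h2 : IsSelfAdjoint P) : ‖P‖ ≤ 1 := by
  have h : ‖P‖ * ‖P‖ = ‖P‖ := by
    rw [← CStarRing.norm_star_mul_self, h2.star_eq, h1.eq]
  nlinarith [norm_nonneg P]

lemma up_spec_bound {a : A} (ha : IsSelfAdjoint a) {ε : ℝ} (h : ‖a * a - a‖ ≤ ε) :
    ∀ l ∈ spectrum ℝ a, |l * l - l| ≤ ε := by
  intro l hl
  have key : cfc (fun t : ℝ => t * t - t) a = a * a - a := by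
    rw [cfc_sub _ _ a, cfc_mul _ _ a, cfc_id' ℝ a]
  have := norm_apply_le_norm_cfc (fun t : ℝ => t * t - t) a hl
  rw [key] at this
  calc |l * l - l| ≤ ‖a * a - a‖ := this
    _ ≤ ε := h

lemma up_exists_proj_near {a : A} (ha : IsSelfAdjoint a) {ε : ℝ} (hε : 0 ≤ ε) (hε16 : ε ≤ 1/16)
    (h : ‖a * a - a‖ ≤ ε) :
    ∃ P : A, IsIdempotentElem P ∧ IsSelfAdjoint P ∧ ‖P - a‖ ≤ 2 * ε := by
  set g : ℝ → ℝ := fun t => min 1 (max 0 (2*t - 1/2)) with hg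
  have hgc : Continuous g := by fun_prop
  have hspec := up_spec_bound ha h
  have hcase : ∀ l ∈ spectrum ℝ a, (l ≤ 1/4 ∧ g l = 0) ∨ (3/4 ≤ l ∧ g l = 1) := by
    intro l hl
    have hb := hspec l hl
    rw [abs_le] at hb
    rcases le_or_gt l (1/4 : ℝ) with hc | hc
    · refine Or.inl ⟨hc, ?_⟩
      show min 1 (max 0 (2*l - 1/2)) = 0
      rw [max_eq_left (by linarith), min_eq_right (by norm_num)]
    · have hc2 : (3/4 : ℝ) ≤ l := by nlinarith [hb.1, hb.2]
      refine Or.inr ⟨hc2, ?_⟩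
      show min 1 (max 0 (2*l - 1/2)) = 1
      rw [max_eq_right (by linarith), min_eq_left (by linarith)]
  refine ⟨cfc g a, ?_, ?_, ?_⟩
  · show cfc g a * cfc g a = cfc g a
    rw [← cfc_mul g g a]
    exact cfc_congr fun l hl => by
      rcases hcase l hl with ⟨-, hq⟩ | ⟨-, hq⟩ <;> simp [hq]
  · exact cfc_predicate g a
  · have heq : cfc g a - a = cfc (fun t => g t - t) a := by
      rw [cfc_sub _ _ a, cfc_id' ℝ a]
    rw [heq]
    refine norm_cfc_le (by linarith) fun l hl => ?_
    have hb := hspec l hl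
    rw [abs_le] at hb
    rcases hcase l hl with ⟨hc, hq⟩ | ⟨hc, hq⟩
    · rw [hq, Real.norm_eq_abs, abs_le]
      constructor <;> nlinarith [hb.1, hb.2]
    · rw [hq, Real.norm_eq_abs, abs_le]
      constructor <;> nlinarith [hb.1, hb.2]

end CStarHelpers

section RankHelpers
variable {E : Type*} [NormedAddCommGroup E] [InnerProductSpace ℂ E]
  [FiniteDimensional ℂ E] [CompleteSpace E]

open Module ContinuousLinearMap

local notation "⟪" x ", " y "⟫" => inner (𝕜 := ℂ) x y

noncomputable abbrev up_clmRange (T : E →L[ℂ] E) : Submodule ℂ E := LinearMap.range (T : E →ₗ[ℂ] E)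

lemma up_apply_eq_self_of_mem_range {P : E →L[ℂ] E} (hP : IsIdempotentElem P) {x : E}
    (hx : x ∈ up_clmRange P) : P x = x := by
  obtain ⟨y, rfl⟩ := hx
  show P (P y) = P y
  conv_lhs => rw [← ContinuousLinearMap.mul_apply, hP.eq]

lemma up_ker_trivial_on_range {w P : E →L[ℂ] E} (hP : IsIdempotentElem P)
    (h : ‖star w * w - P‖ < 1) {x : E} (hx : x ∈ up_clmRange P) (hwx : w x = 0) : x = 0 := by
  have hPx : P x = x := up_apply_eq_self_of_mem_range hP hx
  have h1 : ⟪x, (star w * w - P) x⟫ = - ⟪x, x⟫ := by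
    rw [ContinuousLinearMap.sub_apply, inner_sub_right, ContinuousLinearMap.mul_apply,
      star_eq_adjoint, adjoint_inner_right, hwx, inner_zero_right, hPx]
    ring
  have h2 : ‖⟪x, (star w * w - P) x⟫‖ ≤ ‖star w * w - P‖ * ‖x‖ * ‖x‖ := by
    calc ‖⟪x, (star w * w - P) x⟫‖ ≤ ‖x‖ * ‖(star w * w - P) x‖ := norm_inner_le_norm _ _
      _ ≤ ‖x‖ * (‖star w * w - P‖ * ‖x‖) := by
          gcongr
          exact le_opNorm _ x
      _ = ‖star w * w - P‖ * ‖x‖ * ‖x‖ := by ring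
  rw [h1] at h2
  have hinner : ‖⟪x, x⟫‖ = ‖x‖ * ‖x‖ := by
    rw [inner_self_eq_norm_sq_to_K (𝕜 := ℂ), norm_pow, RCLike.norm_ofReal, abs_norm, pow_two]
  rw [norm_neg, hinner] at h2
  by_contra hx0
  have hpos : 0 < ‖x‖ := norm_pos_iff.2 hx0
  nlinarith [mul_pos hpos hpos]

lemma up_finrank_range_le {w P : E →L[ℂ] E} (hP : IsIdempotentElem P)
    (h : ‖star w * w - P‖ < 1) :
    finrank ℂ (up_clmRange P) ≤ finrank ℂ (up_clmRange w) := by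
  have hdisj : Disjoint (up_clmRange P) (LinearMap.ker (w : E →ₗ[ℂ] E)) := by
    rw [Submodule.disjoint_def]
    intro x hx hker
    exact up_ker_trivial_on_range hP h hx hker
  have h1 := Submodule.finrank_sup_add_finrank_inf_eq (up_clmRange P) (LinearMap.ker (w : E →ₗ[ℂ] E))
  rw [disjoint_iff.1 hdisj, finrank_bot] at h1
  have h2 : finrank ℂ ↥(up_clmRange P ⊔ LinearMap.ker (w : E →ₗ[ℂ] E)) ≤ finrank ℂ E :=
    Submodule.finrank_le _
  have h3 : finrank ℂ (up_clmRange w) + finrank ℂ (LinearMap.ker (w : E →ₗ[ℂ] E)) = finrank ℂ E :=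
    LinearMap.finrank_range_add_finrank_ker (w : E →ₗ[ℂ] E)
  omega

lemma up_up_finrank_range_le_of_near {v P Q : E →L[ℂ] E}
    (hP : IsIdempotentElem P) (hQ : IsIdempotentElem Q) (hQsa : IsSelfAdjoint Q)
    {d1 d2 : ℝ} (h1 : ‖star v * v - P‖ ≤ d1) (h2 : ‖v * star v - Q‖ ≤ d2)
    (hd : d1 + d2 < 1) :
    finrank ℂ (up_clmRange P) ≤ finrank ℂ (up_clmRange Q) := by
  have hR1 : IsIdempotentElem ((1 : E →L[ℂ] E) - Q) := hQ.one_sub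
  have hR2 : IsSelfAdjoint ((1 : E →L[ℂ] E) - Q) := by rw [isSelfAdjoint_iff, star_sub, star_one, hQsa.star_eq]
  have hRnorm : ‖(1 : E →L[ℂ] E) - Q‖ ≤ 1 := up_proj_norm_le_one hR1 hR2
  have hQ0 : ((1 : E →L[ℂ] E) - Q) * Q = 0 := by rw [sub_mul, one_mul, hQ.eq, sub_self]
  have hkey : ‖star v * (((1:E →L[ℂ] E) - Q) * v)‖ ≤ d2 := by
    set w : E →L[ℂ] E := ((1:E →L[ℂ] E) - Q) * v with hw
    have e1 : star v * (((1:E →L[ℂ] E) - Q) * v) = star w * w := by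
      rw [hw, star_mul, hR2.star_eq, mul_assoc, ← mul_assoc ((1:E →L[ℂ] E) - Q), hR1.eq]
    have e3 : ((1:E →L[ℂ] E)-Q) * (v * star v - Q) * (1-Q) = w * star w := by
      have t1 : ((1:E →L[ℂ] E)-Q) * Q * (1-Q) = 0 := by rw [hQ0, zero_mul]
      have t2 : ((1:E →L[ℂ] E)-Q) * (v * star v - Q) * (1-Q)
          = ((1:E →L[ℂ] E)-Q) * (v * star v) * (1-Q) - ((1:E →L[ℂ] E)-Q) * Q * (1-Q) := by
        noncomm_ring
      rw [t2, t1, sub_zero, hw, star_mul, hR2.star_eq]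
      noncomm_ring
    have e2 : ‖((1:E →L[ℂ] E)-Q) * (v * star v - Q) * (1-Q)‖ ≤ d2 := by
      calc ‖((1:E →L[ℂ] E)-Q) * (v * star v - Q) * (1-Q)‖
          ≤ ‖((1:E →L[ℂ] E)-Q) * (v * star v - Q)‖ * ‖(1:E →L[ℂ] E)-Q‖ := norm_mul_le _ _
        _ ≤ ‖(1:E →L[ℂ] E)-Q‖ * ‖v * star v - Q‖ * ‖(1:E →L[ℂ] E)-Q‖ := by
            gcongr; exact norm_mul_le _ _
        _ ≤ 1 * d2 * 1 := by
            have hd2 : (0:ℝ) ≤ d2 := le_trans (norm_nonneg _) h2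
            gcongr
        _ = d2 := by ring
    rw [e1, CStarRing.norm_star_mul_self, ← CStarRing.norm_self_mul_star, ← e3]
    exact e2
  have hww : ‖star (Q * v) * (Q * v) - P‖ < 1 := by
    have e4 : star (Q * v) * (Q * v) - P = (star v * v - P) - star v * (((1:E →L[ℂ] E) - Q) * v) := by
      have hQQ : Q * Q = Q := hQ.eq
      calc star (Q * v) * (Q * v) - P = star v * (Q * Q) * v - P := by
            rw [star_mul, hQsa.star_eq]; noncomm_ring
        _ = (star v * v - P) - star v * (((1:E →L[ℂ] E) - Q) * v) := by rw [hQQ]; noncomm_ring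
    calc ‖star (Q * v) * (Q * v) - P‖
        = ‖(star v * v - P) - star v * (((1:E →L[ℂ] E) - Q) * v)‖ := by rw [e4]
      _ ≤ ‖star v * v - P‖ + ‖star v * (((1:E →L[ℂ] E) - Q) * v)‖ := norm_sub_le _ _
      _ ≤ d1 + d2 := add_le_add h1 hkey
      _ < 1 := hd
  calc finrank ℂ (up_clmRange P) ≤ finrank ℂ (up_clmRange (Q * v)) := up_finrank_range_le hP hww
    _ ≤ finrank ℂ (up_clmRange Q) := by
        apply Submodule.finrank_mono
        rintro _ ⟨y, rfl⟩
        exact ⟨v y, rfl⟩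

lemma up_finrank_range_eq_of_near {v P Q : E →L[ℂ] E}
    (hP : IsIdempotentElem P) (hPsa : IsSelfAdjoint P)
    (hQ : IsIdempotentElem Q) (hQsa : IsSelfAdjoint Q)
    {d1 d2 : ℝ} (h1 : ‖star v * v - P‖ ≤ d1) (h2 : ‖v * star v - Q‖ ≤ d2)
    (hd : d1 + d2 < 1) :
    finrank ℂ (up_clmRange P) = finrank ℂ (up_clmRange Q) := by
  refine le_antisymm (up_up_finrank_range_le_of_near hP hQ hQsa h1 h2 hd) ?_
  exact up_up_finrank_range_le_of_near (v := star v) (d1 := d2) (d2 := d1) hQ hP hPsa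
    (by rwa [star_star]) (by rwa [star_star]) (by linarith)
end RankHelpers

section SumLemma
variable {E : Type*} [NormedAddCommGroup E] [InnerProductSpace ℂ E]
  [FiniteDimensional ℂ E] [CompleteSpace E]

open Module ContinuousLinearMap

local notation "⟪" x ", " y "⟫" => inner (𝕜 := ℂ) x y

lemma up_norm_inner_self (x : E) : ‖⟪x, x⟫‖ = ‖x‖ * ‖x‖ := by
  rw [inner_self_eq_norm_sq_to_K (𝕜 := ℂ), norm_pow, RCLike.norm_ofReal, abs_norm, pow_two]

lemma up_sum_finrank_ranges {m : ℕ} (hm : 1 ≤ m) (P : Fin m → E →L[ℂ] E)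
    (hidem : ∀ j, IsIdempotentElem (P j)) (hsa : ∀ j, IsSelfAdjoint (P j))
    {η : ℝ} (hη : 0 ≤ η) (horth : ∀ i j, i ≠ j → ‖P i * P j‖ ≤ η)
    (hmη : (m : ℝ) * η < 1) (hsum : ‖(∑ j, P j) - 1‖ < 1) :
    ∑ j, finrank ℂ (up_clmRange (P j)) = finrank ℂ E := by
  haveI : Nonempty (Fin m) := ⟨⟨0, hm⟩⟩
  set L : (Π j, ↥(up_clmRange (P j))) →ₗ[ℂ] E :=
    LinearMap.lsum ℂ (fun j => ↥(up_clmRange (P j))) ℂ (fun j => (up_clmRange (P j)).subtype) with hL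
  have hLapp : ∀ x, L x = ∑ j, (x j : E) := by
    intro x; simp [hL, LinearMap.lsum_apply]
  have hinj : Function.Injective L := by
    rw [← LinearMap.ker_eq_bot, LinearMap.ker_eq_bot']
    intro x hx
    obtain ⟨j₀, -, hj₀⟩ := Finset.exists_max_image Finset.univ (fun j => ‖(x j : E)‖)
      ⟨⟨0, hm⟩, Finset.mem_univ _⟩
    have hz : ∀ i, i ≠ j₀ → ‖⟪(x i : E), (x j₀ : E)⟫‖ ≤ η * (‖(x j₀ : E)‖ * ‖(x j₀ : E)‖) := by
      intro i hij
      have hxi : P i (x i : E) = (x i : E) := up_apply_eq_self_of_mem_range (hidem i) (x i).2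
      have hxj : P j₀ (x j₀ : E) = (x j₀ : E) := up_apply_eq_self_of_mem_range (hidem j₀) (x j₀).2
      have hadj : ContinuousLinearMap.adjoint (P j₀) = P j₀ := by
        rw [← star_eq_adjoint, (hsa j₀).star_eq]
      have key : ⟪(x i : E), (x j₀ : E)⟫ = ⟪(P j₀ * P i) (x i : E), (x j₀ : E)⟫ := by
        calc ⟪(x i : E), (x j₀ : E)⟫ = ⟪(x i : E), P j₀ (x j₀ : E)⟫ := by rw [hxj]
          _ = ⟪ContinuousLinearMap.adjoint (P j₀) (x i : E), (x j₀ : E)⟫ :=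
              (adjoint_inner_left _ _ _).symm
          _ = ⟪(P j₀ * P i) (x i : E), (x j₀ : E)⟫ := by
              rw [hadj, ContinuousLinearMap.mul_apply, hxi]
      rw [key]
      calc ‖⟪(P j₀ * P i) (x i : E), (x j₀ : E)⟫‖
          ≤ ‖(P j₀ * P i) (x i : E)‖ * ‖(x j₀ : E)‖ := norm_inner_le_norm _ _
        _ ≤ (‖P j₀ * P i‖ * ‖(x i : E)‖) * ‖(x j₀ : E)‖ := by
            gcongr; exact le_opNorm _ _
        _ ≤ (η * ‖(x j₀ : E)‖) * ‖(x j₀ : E)‖ := by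
            have h5 := mul_le_mul (horth j₀ i (Ne.symm hij)) (hj₀ i (Finset.mem_univ i))
              (norm_nonneg _) hη
            exact mul_le_mul_of_nonneg_right h5 (norm_nonneg _)
        _ = η * (‖(x j₀ : E)‖ * ‖(x j₀ : E)‖) := by ring
    have hsumall : ∑ i, ⟪(x i : E), (x j₀ : E)⟫ = 0 := by
      rw [← sum_inner, show (∑ i, (x i : E)) = 0 from (hLapp x) ▸ hx, inner_zero_left]
    have hsum0 : ⟪(x j₀ : E), (x j₀ : E)⟫ + ∑ i ∈ Finset.univ.erase j₀, ⟪(x i : E), (x j₀ : E)⟫ = 0 := by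
      rw [Finset.add_sum_erase Finset.univ (fun i => ⟪(x i : E), (x j₀ : E)⟫) (Finset.mem_univ j₀)]
      exact hsumall
    have hbound : ‖(x j₀ : E)‖ * ‖(x j₀ : E)‖ ≤ (m : ℝ) * η * (‖(x j₀ : E)‖ * ‖(x j₀ : E)‖) := by
      have e1 : ⟪(x j₀ : E), (x j₀ : E)⟫ = -∑ i ∈ Finset.univ.erase j₀, ⟪(x i : E), (x j₀ : E)⟫ := by
        linear_combination hsum0
      calc ‖(x j₀ : E)‖ * ‖(x j₀ : E)‖ = ‖⟪(x j₀ : E), (x j₀ : E)⟫‖ := (up_norm_inner_self _).symm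
        _ = ‖∑ i ∈ Finset.univ.erase j₀, ⟪(x i : E), (x j₀ : E)⟫‖ := by rw [e1, norm_neg]
        _ ≤ ∑ i ∈ Finset.univ.erase j₀, ‖⟪(x i : E), (x j₀ : E)⟫‖ := norm_sum_le _ _
        _ ≤ ∑ i ∈ Finset.univ.erase j₀, η * (‖(x j₀ : E)‖ * ‖(x j₀ : E)‖) :=
            Finset.sum_le_sum fun i hi => hz i (Finset.ne_of_mem_erase hi)
        _ = ((Finset.univ.erase j₀).card : ℝ) * (η * (‖(x j₀ : E)‖ * ‖(x j₀ : E)‖)) := by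
            rw [Finset.sum_const, nsmul_eq_mul]
        _ ≤ (m : ℝ) * η * (‖(x j₀ : E)‖ * ‖(x j₀ : E)‖) := by
            have : ((Finset.univ.erase j₀).card : ℝ) ≤ (m : ℝ) := by
              have := Finset.card_erase_le (s := (Finset.univ : Finset (Fin m))) (a := j₀)
              simp only [Finset.card_univ, Fintype.card_fin] at this
              exact_mod_cast le_trans this (le_refl m)
            nlinarith [norm_nonneg (x j₀ : E), mul_nonneg hη (mul_nonneg (norm_nonneg (x j₀ : E)) (norm_nonneg (x j₀ : E)))]
    have hj0z : (x j₀ : E) = 0 := by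
      by_contra hne
      have hpos : 0 < ‖(x j₀ : E)‖ := norm_pos_iff.2 hne
      nlinarith [mul_pos hpos hpos]
    funext i
    refine Subtype.ext ?_
    have : ‖(x i : E)‖ ≤ ‖(x j₀ : E)‖ := hj₀ i (Finset.mem_univ i)
    rw [hj0z, norm_zero] at this
    simpa using norm_le_zero_iff.mp this
  have hsurj : Function.Surjective L := by
    have hs1 : ‖(1 : E →L[ℂ] E) - ∑ j, P j‖ < 1 := by rwa [norm_sub_rev] at hsum
    let u : (E →L[ℂ] E)ˣ := Units.oneSub ((1 : E →L[ℂ] E) - ∑ j, P j) hs1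
    have hu : (u : E →L[ℂ] E) = ∑ j, P j := sub_sub_cancel 1 (∑ j, P j)
    intro y
    refine ⟨fun j => ⟨P j ((↑u⁻¹ : E →L[ℂ] E) y), ⟨_, rfl⟩⟩, ?_⟩
    rw [hLapp]
    calc ∑ j, P j ((↑u⁻¹ : E →L[ℂ] E) y)
        = (∑ j, P j) ((↑u⁻¹ : E →L[ℂ] E) y) := (ContinuousLinearMap.sum_apply _ _ _).symm
      _ = ((∑ j, P j) * (↑u⁻¹ : E →L[ℂ] E)) y := rfl
      _ = y := by rw [← hu, u.mul_inv]; rfl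
  have heq := LinearEquiv.finrank_eq (LinearEquiv.ofBijective L ⟨hinj, hsurj⟩)
  rw [Module.finrank_pi_fintype ℂ] at heq
  exact heq
end SumLemma

section KeyLemma
variable {E : Type*} [NormedAddCommGroup E] [InnerProductSpace ℂ E]
  [FiniteDimensional ℂ E] [CompleteSpace E]

open Module

lemma up_key_dvd (m : ℕ) (hm : 1 ≤ m) (j₀ : Fin m) {ε : ℝ} (hε : 0 < ε) (hεm : ε * (16 * m) ≤ 1)
    (b : Fin m → E →L[ℂ] E)
    (h1 : ∀ j, ‖(b j * star (b j)) * (b j * star (b j)) - b j * star (b j)‖ ≤ ε)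
    (h2 : ∀ j, ‖star (b j) * b j - b j₀ * star (b j₀)‖ ≤ ε)
    (h3 : ‖(∑ j, b j * star (b j)) - 1‖ ≤ ε)
    (h4 : ∀ i j, i ≠ j → ‖(b i * star (b i)) * (b j * star (b j))‖ ≤ ε) :
    m ∣ finrank ℂ E := by
  have hm1 : (1:ℝ) ≤ (m:ℝ) := by exact_mod_cast hm
  have hε16 : ε ≤ 1/16 := by nlinarith
  have hsa : ∀ j, IsSelfAdjoint (b j * star (b j)) := fun j =>
    isSelfAdjoint_iff.2 (by rw [star_mul, star_star])
  have hP : ∀ j, ∃ P : E →L[ℂ] E,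
      IsIdempotentElem P ∧ IsSelfAdjoint P ∧ ‖P - b j * star (b j)‖ ≤ 2 * ε :=
    fun j => up_exists_proj_near (hsa j) hε.le hε16 (h1 j)
  choose P hPidem hPsa hPnear using hP
  have hPnorm : ∀ j, ‖P j‖ ≤ 1 := fun j => up_proj_norm_le_one (hPidem j) (hPsa j)
  have hanorm : ∀ j, ‖b j * star (b j)‖ ≤ 1 + 2*ε := by
    intro j
    calc ‖b j * star (b j)‖ = ‖P j - (P j - b j * star (b j))‖ := by rw [_root_.sub_sub_cancel]
      _ ≤ ‖P j‖ + ‖P j - b j * star (b j)‖ := norm_sub_le _ _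
      _ ≤ 1 + 2*ε := add_le_add (hPnorm j) (hPnear j)
  have hrank : ∀ j, finrank ℂ (up_clmRange (P j)) = finrank ℂ (up_clmRange (P j₀)) := by
    intro j
    refine (up_finrank_range_eq_of_near (v := b j) (hPidem j₀) (hPsa j₀) (hPidem j) (hPsa j)
      (d1 := 3*ε) (d2 := 2*ε) ?_ ?_ (by linarith)).symm
    · calc ‖star (b j) * b j - P j₀‖
          = ‖(star (b j) * b j - b j₀ * star (b j₀)) + (b j₀ * star (b j₀) - P j₀)‖ := by
            rw [_root_.sub_add_sub_cancel]
        _ ≤ ‖star (b j) * b j - b j₀ * star (b j₀)‖ + ‖b j₀ * star (b j₀) - P j₀‖ := norm_add_le _ _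
        _ ≤ ε + 2*ε := add_le_add (h2 j) (by rw [norm_sub_rev]; exact hPnear j₀)
        _ = 3*ε := by ring
    · rw [norm_sub_rev]; exact hPnear j
  have horth : ∀ i j, i ≠ j → ‖P i * P j‖ ≤ 6*ε := by
    intro i j hij
    have e : P i * P j = (P i - b i * star (b i)) * P j
        + (b i * star (b i)) * (P j - b j * star (b j))
        + (b i * star (b i)) * (b j * star (b j)) := by noncomm_ring
    calc ‖P i * P j‖
        ≤ ‖(P i - b i * star (b i)) * P j‖ + ‖(b i * star (b i)) * (P j - b j * star (b j))‖
          + ‖(b i * star (b i)) * (b j * star (b j))‖ := by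
          rw [e]; exact le_trans (norm_add_le _ _) (by gcongr; exact norm_add_le _ _)
      _ ≤ ‖P i - b i * star (b i)‖ * ‖P j‖ + ‖b i * star (b i)‖ * ‖P j - b j * star (b j)‖ + ε := by
          gcongr <;> [exact norm_mul_le _ _; exact norm_mul_le _ _; exact h4 i j hij]
      _ ≤ (2*ε) * 1 + (1 + 2*ε) * (2*ε) + ε := by
          gcongr
          · exact hPnear i
          · exact hPnorm j
          · exact hanorm i
          · exact hPnear j
      _ ≤ 6*ε := by nlinarith
  have hsum : ‖(∑ j, P j) - 1‖ < 1 := by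
    have e : (∑ j, P j) - 1 = (∑ j, (P j - b j * star (b j)))
        + ((∑ j, b j * star (b j)) - 1) := by
      rw [Finset.sum_sub_distrib]; abel
    have hs1 : ‖∑ j, (P j - b j * star (b j))‖ ≤ (m:ℝ) * (2*ε) := by
      calc ‖∑ j, (P j - b j * star (b j))‖ ≤ ∑ j, ‖P j - b j * star (b j)‖ := norm_sum_le _ _
        _ ≤ ∑ _j : Fin m, 2*ε := Finset.sum_le_sum fun j _ => hPnear j
        _ = (m:ℝ) * (2*ε) := by rw [Finset.sum_const, nsmul_eq_mul]; simp
    calc ‖(∑ j, P j) - 1‖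
        ≤ ‖∑ j, (P j - b j * star (b j))‖ + ‖(∑ j, b j * star (b j)) - 1‖ := by
          rw [e]; exact norm_add_le _ _
      _ ≤ (m:ℝ) * (2*ε) + ε := add_le_add hs1 h3
      _ < 1 := by nlinarith
  have htotal := up_sum_finrank_ranges hm P hPidem hPsa (by positivity) horth (by nlinarith) hsum
  refine ⟨finrank ℂ (up_clmRange (P j₀)), ?_⟩
  rw [← htotal]
  rw [Finset.sum_congr rfl fun j _ => hrank j, Finset.sum_const, Finset.card_univ,
    Fintype.card_fin, smul_eq_mul]
end KeyLemma

instance (priority := 10000) (k : ℕ) : NormedStarGroup (Matrix (Fin k) (Fin k) ℂ) :=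
  CStarRing.to_normedStarGroup

section MatrixKey

open Module

lemma up_matrix_key_dvd (p m : ℕ) (hm : 1 ≤ m) (j₀ : Fin m) {ε : ℝ} (hε : 0 < ε)
    (hεm : ε * (16 * m) ≤ 1) (b : Fin m → Matrix (Fin p) (Fin p) ℂ)
    (h1 : ∀ j, ‖(b j * star (b j)) * (b j * star (b j)) - b j * star (b j)‖ ≤ ε)
    (h2 : ∀ j, ‖star (b j) * b j - b j₀ * star (b j₀)‖ ≤ ε)
    (h3 : ‖(∑ j, b j * star (b j)) - 1‖ ≤ ε)
    (h4 : ∀ i j, i ≠ j → ‖(b i * star (b i)) * (b j * star (b j))‖ ≤ ε) :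
    m ∣ p := by
  classical
  set Ψ := Matrix.toEuclideanCLM (𝕜 := ℂ) (n := Fin p) with hΨdef
  have hnorm : ∀ M : Matrix (Fin p) (Fin p) ℂ, ‖Ψ M‖ = ‖M‖ := fun _ => rfl
  have hdvd := up_key_dvd (E := EuclideanSpace ℂ (Fin p)) m hm j₀ hε hεm (fun j => Ψ (b j))
    (fun j => by simpa only [← map_star, ← map_mul, ← map_sub, hnorm] using h1 j)
    (fun j => by simpa only [← map_star, ← map_mul, ← map_sub, hnorm] using h2 j)
    (by simpa only [← map_star, ← map_mul, ← map_sum, ← map_one Ψ, ← map_sub, hnorm] using h3)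
    (fun i j hij => by simpa only [← map_star, ← map_mul, hnorm] using h4 i j hij)
  rwa [finrank_euclideanSpace, Fintype.card_fin] at hdvd

end MatrixKey

set_option maxHeartbeats 1000000 in
/-- if `N n` is prime `U`-almost everywhere and `N n → ∞` along `U`, then
for `m ≥ 2` there is no unital `*`-homomorphism of `M_m(ℂ)` into the ultraproduct of the
`M_{N n}(ℂ)`. -/
theorem stmt12 (U : Ultrafilter ℕ) (hU : (U : Filter ℕ) ≤ Filter.cofinite)
    (N : ℕ → ℕ) (hN : ∀ n, 1 ≤ N n)
    (hprime : {n : ℕ | (N n).Prime} ∈ U)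
    (hbig : ∀ k : ℕ, {n : ℕ | k < N n} ∈ U)
    (m : ℕ) (hm : 2 ≤ m) :
    haveI : ∀ n, Nontrivial (Matrix (Fin (N n)) (Fin (N n)) ℂ) := fun n =>
      ⟨0, 1, fun h => by
        have := congrFun (congrFun h ⟨0, hN n⟩) ⟨0, hN n⟩
        simp [Matrix.one_apply] at this⟩
    ¬ Nonempty (Matrix (Fin m) (Fin m) ℂ →⋆ₐ[ℂ]
        UProd U fun n => Matrix (Fin (N n)) (Fin (N n)) ℂ) := by
  haveI : ∀ n, Nontrivial (Matrix (Fin (N n)) (Fin (N n)) ℂ) := fun n =>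
    ⟨0, 1, fun h => by
      have := congrFun (congrFun h ⟨0, hN n⟩) ⟨0, hN n⟩
      simp [Matrix.one_apply] at this⟩
  rintro ⟨φ⟩
  classical
  have hm0 : 0 < m := by omega
  let j₀ : Fin m := ⟨0, hm0⟩
  -- matrix identities in M_m
  have hstar : ∀ (i k : Fin m), star (Matrix.single i k (1:ℂ)) = Matrix.single k i 1 := by
    intro i k
    ext a c
    simp [Matrix.star_apply, Matrix.single, and_comm]
  have hsum1 : (∑ j : Fin m, Matrix.single j j (1:ℂ)) = 1 := by
    ext a c
    rw [Matrix.sum_apply]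
    by_cases h : a = c
    · subst h
      rw [Finset.sum_eq_single a]
      · simp [Matrix.single]
      · intro j _ hj; simp [Matrix.single, hj]
      · simp
    · rw [Matrix.one_apply_ne h]
      refine Finset.sum_eq_zero fun j _ => ?_
      simp only [Matrix.single]
      aesop
  -- lift the images of the matrix units
  have hsurj : ∀ y : UProd U fun n => Matrix (Fin (N n)) (Fin (N n)) ℂ,
      ∃ x : lp (fun n => Matrix (Fin (N n)) (Fin (N n)) ℂ) ∞,
        uproj U (fun n => Matrix (Fin (N n)) (Fin (N n)) ℂ) x = y :=
    SeparationQuotient.surjective_mk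
  choose b hb using fun j : Fin m => hsurj (φ (Matrix.single j j₀ 1))
  have hπsub : ∀ x y : lp (fun n => Matrix (Fin (N n)) (Fin (N n)) ℂ) ∞,
      uproj U (fun n => Matrix (Fin (N n)) (Fin (N n)) ℂ) (x - y) = uproj U (fun n => Matrix (Fin (N n)) (Fin (N n)) ℂ) x - uproj U (fun n => Matrix (Fin (N n)) (Fin (N n)) ℂ) y :=
    fun x y => SeparationQuotient.mk_sub
      (toPre U (fun n => Matrix (Fin (N n)) (Fin (N n)) ℂ) x)
      (toPre U (fun n => Matrix (Fin (N n)) (Fin (N n)) ℂ) y)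
  have hπsum : ∀ (f : Fin m → lp (fun n => Matrix (Fin (N n)) (Fin (N n)) ℂ) ∞) (s : Finset (Fin m)),
      uproj U (fun n => Matrix (Fin (N n)) (Fin (N n)) ℂ) (∑ j ∈ s, f j) = ∑ j ∈ s, uproj U (fun n => Matrix (Fin (N n)) (Fin (N n)) ℂ) (f j) := by
    intro f s
    have hz : uproj U (fun n => Matrix (Fin (N n)) (Fin (N n)) ℂ) 0 = 0 := by
      have h00 := hπsub 0 0
      rw [sub_zero] at h00
      rw [h00, sub_self]
    induction s using Finset.induction with
    | empty => simpa using hz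
    | insert _ _ h ih => rw [Finset.sum_insert h, Finset.sum_insert h, uproj_add, ih]
  have hq : ∀ j, uproj U (fun n => Matrix (Fin (N n)) (Fin (N n)) ℂ) (b j * star (b j)) = φ (Matrix.single j j 1) := by
    intro j
    rw [uproj_mul, uproj_star, hb j, ← map_star φ, ← map_mul φ, hstar j j₀,
      Matrix.single_mul_single_same, mul_one]
  have hX1 : ∀ j, uproj U (fun n => Matrix (Fin (N n)) (Fin (N n)) ℂ) ((b j * star (b j)) * (b j * star (b j)) - b j * star (b j)) = 0 := by
    intro j
    rw [hπsub, uproj_mul, hq j, ← map_mul φ, Matrix.single_mul_single_same, mul_one, sub_self]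
  have hX2 : ∀ j, uproj U (fun n => Matrix (Fin (N n)) (Fin (N n)) ℂ) (star (b j) * b j - b j₀ * star (b j₀)) = 0 := by
    intro j
    rw [hπsub, uproj_mul, uproj_star, hb j, hq j₀, ← map_star φ, ← map_mul φ, hstar j j₀,
      Matrix.single_mul_single_same, mul_one, sub_self]
  have hX3 : uproj U (fun n => Matrix (Fin (N n)) (Fin (N n)) ℂ) ((∑ j : Fin m, b j * star (b j)) - 1) = 0 := by
    rw [hπsub, hπsum, uproj_one, Finset.sum_congr rfl (fun j _ => hq j), ← map_sum φ, hsum1,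
      map_one, sub_self]
  have hX4 : ∀ i j, i ≠ j →
      uproj U (fun n => Matrix (Fin (N n)) (Fin (N n)) ℂ) ((b i * star (b i)) * (b j * star (b j))) = 0 := by
    intro i j hij
    rw [uproj_mul, hq i, hq j, ← map_mul φ,
      Matrix.single_mul_single_of_ne (h := hij), map_zero]
  -- pass to an ultrafilter-large set where everything is small
  set ε : ℝ := 1 / (16 * ((m : ℝ) + 1)) with hεdef
  have hε : 0 < ε := by positivity
  have hev0 : ∀ x : lp (fun n => Matrix (Fin (N n)) (Fin (N n)) ℂ) ∞,
      uproj U (fun n => Matrix (Fin (N n)) (Fin (N n)) ℂ) x = 0 → ∀ᶠ n in (U : Filter ℕ), ‖x n‖ < ε := by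
    intro x hx
    have h0 : ulim U (fun n => Matrix (Fin (N n)) (Fin (N n)) ℂ) x = 0 := by rw [← norm_uproj, hx, norm_zero]
    have ht := tendsto_ulim (U := U) x
    rw [h0] at ht
    exact ht.eventually_lt_const hε
  have hev : ∀ᶠ n in (U : Filter ℕ),
      ((∀ j, ‖((b j * star (b j)) * (b j * star (b j)) - b j * star (b j)) n‖ < ε)
      ∧ (∀ j, ‖(star (b j) * b j - b j₀ * star (b j₀)) n‖ < ε))
      ∧ (‖((∑ j : Fin m, b j * star (b j)) - 1) n‖ < ε
      ∧ (∀ i j, i ≠ j → ‖((b i * star (b i)) * (b j * star (b j))) n‖ < ε)) := by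
    refine Filter.Eventually.and (Filter.Eventually.and ?_ ?_) (Filter.Eventually.and ?_ ?_)
    · exact Filter.eventually_all.2 fun j => hev0 _ (hX1 j)
    · exact Filter.eventually_all.2 fun j => hev0 _ (hX2 j)
    · exact hev0 _ hX3
    · refine Filter.eventually_all.2 fun i => Filter.eventually_all.2 fun j => ?_
      by_cases hij : i = j
      · exact Filter.Eventually.of_forall fun n h => (h hij).elim
      · exact (hev0 _ (hX4 i j hij)).mono fun n h _ => h
  have hprU : ∀ᶠ n in (U : Filter ℕ), (N n).Prime := hprime
  have hbigU : ∀ᶠ n in (U : Filter ℕ), m < N n := hbig m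
  obtain ⟨n, ⟨⟨h1n, h2n⟩, h3n, h4n⟩, hpn, hmn⟩ := (hev.and (hprU.and hbigU)).exists
  have hεm : ε * (16 * m) ≤ 1 := by
    rw [hεdef]
    rw [div_mul_eq_mul_div, one_mul, div_le_one (by positivity)]
    push_cast
    linarith
  have hdvd : m ∣ N n := by
    refine up_matrix_key_dvd (N n) m (by omega) j₀ hε hεm (fun j => (b j) n) ?_ ?_ ?_ ?_
    · intro j
      exact (h1n j).le
    · intro j
      exact (h2n j).le
    · have h := h3n.le
      rwa [lp.coeFn_sub, lp.coeFn_sum, lp.infty_coeFn_one, Pi.sub_apply, Finset.sum_apply, Pi.one_apply] at h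
    · intro i j hij
      simpa using (h4n i j hij).le
  rcases hpn.eq_one_or_self_of_dvd m hdvd with h | h
  · omega
  · omega
end
end
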